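/- Suppose a quiver Q admits a scaling solution, i.e., points (r⃗_i)_{i∈Q0} in ℝ³, not all equal where arrows join distinct points, such that for every vertex i: Σ_{a:i→j} 1/|r⃗_i − r⃗_j| − Σ_{a:j→i} 1/|r⃗_i − r⃗_j| = 0 (sum over arrows with multiplicity, all pairwise distances between endpoints of arrows being positive). Then for every weak cut I of Q one has |I| ≤ |Q1 − I|, where cardinalities count arrows. -/

import Mathlib

open Relation

/-- One directed step along an arrow of the quiver. -/
def QStep {V A : Type} (s t : A → V) (i j : V) : Prop := ∃ a : A, s a = i ∧ t a = j

/-- One undirected step along an arrow of the quiver. -/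
def UStep {V A : Type} (s t : A → V) (i j : V) : Prop :=
  ∃ a : A, (s a = i ∧ t a = j) ∨ (s a = j ∧ t a = i)

/-- A current is conserved if at each vertex the incoming total equals the outgoing total. -/
def Conserved {V A : Type} [Fintype A] [DecidableEq V] (s t : A → V) (lam : A → ℝ) : Prop :=
  ∀ i : V, ∑ a ∈ Finset.univ.filter (fun a => t a = i), lam a
         = ∑ a ∈ Finset.univ.filter (fun a => s a = i), lam a

/-- A simple oriented cycle of the quiver: a nonempty cyclically composable list of arrows
whose sources are pairwise distinct. -/
structure SimpleCycle {V A : Type} (s t : A → V) where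
  arrows : List A
  nonempty : arrows ≠ []
  chain : ∀ k : ℕ, ∀ h : k < arrows.length,
    t (arrows.get ⟨k, h⟩) =
      s (arrows.get ⟨(k + 1) % arrows.length, Nat.mod_lt _ (List.length_pos_iff.mpr nonempty)⟩)
  simple : (arrows.map s).Nodup

/-- A cut: every simple oriented cycle contains exactly one arrow of `I`. -/
def IsCut {V A : Type} [DecidableEq A] (s t : A → V) (I : Finset A) : Prop :=
  ∀ w : SimpleCycle s t, (w.arrows.filter (fun a => decide (a ∈ I))).length = 1

/-- A weak cut: every simple oriented cycle contains at most one arrow of `I`. -/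
def IsWeakCut {V A : Type} [DecidableEq A] (s t : A → V) (I : Finset A) : Prop :=
  ∀ w : SimpleCycle s t, (w.arrows.filter (fun a => decide (a ∈ I))).length ≤ 1

/-- An R-charge: a real function on arrows summing to 2 around every simple oriented cycle. -/
def IsRCharge {V A : Type} (s t : A → V) (R : A → ℝ) : Prop :=
  ∀ w : SimpleCycle s t, (w.arrows.map R).sum = 2


set_option linter.unusedSectionVars false

namespace Stmt13Aux

variable {V A : Type} [Fintype V] [Fintype A] [DecidableEq V] [DecidableEq A]

/-- length of a filtered list as a real-valued sum of indicators over indices -/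
lemma filt_len (L : List A) (p : A → Bool) :
    ((L.filter p).length : ℝ) = (L.map (fun a => if p a then (1:ℝ) else 0)).sum := by
  induction L with
  | nil => simp
  | cons b L ih =>
    rw [List.filter_cons]
    by_cases hb : p b <;> simp [hb, ih, add_comm]

/-- the shift map on indices of a cycle -/
lemma shift_injective (len : ℕ) (hlen : 0 < len) :
    Function.Injective (fun k : Fin len => (⟨(k.1 + 1) % len, Nat.mod_lt _ hlen⟩ : Fin len)) := by
  intro a b hab
  simp only [Fin.mk.injEq] at hab
  have ha : (a.1 + 1) % len = if a.1 + 1 = len then 0 else a.1 + 1 := by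
    split
    · simp_all
    · exact Nat.mod_eq_of_lt (by omega)
  have hb : (b.1 + 1) % len = if b.1 + 1 = len then 0 else b.1 + 1 := by
    split
    · simp_all
    · exact Nat.mod_eq_of_lt (by omega)
  rw [ha, hb] at hab
  have := a.2; have := b.2
  apply Fin.ext
  split at hab <;> split at hab <;> omega

/-- the indicator current of a simple cycle satisfies conservation at every vertex -/
lemma cycle_filter_len_eq (s t : A → V) (w : SimpleCycle s t) (v : V) :
    ((w.arrows.filter (fun a => decide (t a = v))).length : ℝ)
      = ((w.arrows.filter (fun a => decide (s a = v))).length : ℝ) := by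
  set L := w.arrows with hL
  have hlen : 0 < L.length := List.length_pos_iff.mpr w.nonempty
  rw [filt_len, filt_len, ← Fin.sum_univ_fun_getElem , ← Fin.sum_univ_fun_getElem]
  refine Fintype.sum_bijective (fun k : Fin L.length => (⟨(k.1 + 1) % L.length, Nat.mod_lt _ hlen⟩ : Fin L.length)) ((Finite.injective_iff_bijective).mp (shift_injective _ hlen)) _ _ ?_
  intro k
  have := w.chain k.1 k.2
  simp only [← hL] at this ⊢
  simp only [List.get_eq_getElem] at this ⊢
  simp only [show t L[k.1] = s (L[(k.1 + 1) % L.length]'(Nat.mod_lt _ hlen)) from this]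


lemma sum_ind (L : List A) (hL : L.Nodup) (p : A → Prop) [DecidablePred p] :
    ∑ a ∈ Finset.univ.filter p, (if a ∈ L then (1:ℝ) else 0)
      = ((L.filter (fun a => decide (p a))).length : ℝ) := by
  have h1 : ∑ a ∈ Finset.univ.filter p, (if a ∈ L then (1:ℝ) else 0)
      = ∑ a ∈ (Finset.univ.filter p) ∩ L.toFinset, (1:ℝ) := by
    rw [← Finset.sum_ite_mem]
    exact Finset.sum_congr rfl (by intro a _; simp [List.mem_toFinset])
  rw [h1, Finset.sum_const, nsmul_eq_mul, mul_one]
  have h2 : (Finset.univ.filter p) ∩ L.toFinset = (L.filter (fun a => decide (p a))).toFinset := by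
    ext a; simp [and_comm]
  rw [h2, List.toFinset_card_of_nodup (hL.filter _)]

lemma nodup_arrows (s t : A → V) (w : SimpleCycle s t) : w.arrows.Nodup :=
  w.simple.of_map

lemma ind_conserved (s t : A → V) (w : SimpleCycle s t) :
    Conserved s t (fun a => if a ∈ w.arrows then (1:ℝ) else 0) := by
  intro v
  rw [sum_ind _ (nodup_arrows s t w) (fun a => t a = v),
      sum_ind _ (nodup_arrows s t w) (fun a => s a = v)]
  exact cycle_filter_len_eq s t w v

/-- extraction of a simple cycle inside the support of a nonneg conserved current -/
lemma exists_cycle (s t : A → V) (lam : A → ℝ) (hnn : ∀ a, 0 ≤ lam a)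
    (hc : Conserved s t lam) (a0 : A) (h0 : 0 < lam a0) :
    ∃ w : SimpleCycle s t, ∀ a ∈ w.arrows, 0 < lam a := by
  classical
  -- one can always step forward within the support
  have step : ∀ a : A, 0 < lam a → ∃ b, s b = t a ∧ 0 < lam b := by
    intro a ha
    have hin : 0 < ∑ b ∈ Finset.univ.filter (fun b => t b = t a), lam b := by
      have : lam a ≤ ∑ b ∈ Finset.univ.filter (fun b => t b = t a), lam b :=
        Finset.single_le_sum (fun b _ => hnn b) (by simp)
      linarith
    rw [hc (t a)] at hin
    by_contra hcon
    push_neg at hcon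
    have hle : ∑ b ∈ Finset.univ.filter (fun b => s b = t a), lam b ≤ 0 :=
      Finset.sum_nonpos (fun b hb => hcon b (Finset.mem_filter.mp hb).2)
    linarith
  choose nxt hs hp using step
  -- the forward walk
  let f : ℕ → {a : A // 0 < lam a} := fun n => Nat.rec ⟨a0, h0⟩ (fun _ prev => ⟨nxt prev.1 prev.2, hp prev.1 prev.2⟩) n
  have hf : ∀ n, t (f n).1 = s (f (n + 1)).1 := fun n => (hs (f n).1 (f n).2).symm
  -- pigeonhole on sources
  have hex : ∃ n, ∃ m, m < n ∧ s (f m).1 = s (f n).1 := by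
    obtain ⟨m, n, hne, hmn⟩ := Finite.exists_ne_map_eq_of_infinite (fun n : ℕ => s (f n).1)
    rcases Nat.lt_or_ge m n with h | h
    · exact ⟨n, m, h, hmn⟩
    · exact ⟨m, n, lt_of_le_of_ne h (Ne.symm hne), hmn.symm⟩
  let n0 := Nat.find hex
  obtain ⟨m0, hm0, heq⟩ : ∃ m, m < n0 ∧ s (f m).1 = s (f n0).1 := Nat.find_spec hex
  set len := n0 - m0 with hlen_def
  have hlen : 0 < len := by omega
  let L : List A := (List.range len).map (fun k => (f (m0 + k)).1)
  have hLlen : L.length = len := by simp [L]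
  have hget : ∀ (k : ℕ) (h : k < L.length), L.get ⟨k, h⟩ = (f (m0 + k)).1 := by
    intro k h
    simp [L]
  refine ⟨⟨L, ?_, ?_, ?_⟩, ?_⟩
  · intro hnil; rw [hnil] at hLlen; simp at hLlen; omega
  · intro k h
    rw [hget k h, hget _ _]
    have hk : k < len := by rwa [hLlen] at h
    rcases Nat.lt_or_ge (k + 1) len with h1 | h1
    · rw [hLlen, Nat.mod_eq_of_lt h1]
      exact hf (m0 + k)
    · have : k + 1 = len := by omega
      rw [hLlen, this, Nat.mod_self]
      have h2 : m0 + k + 1 = n0 := by omega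
      rw [show m0 + 0 = m0 by omega, heq, ← h2]
      exact hf (m0 + k)
  · -- nodup of sources
    have : (L.map s) = (List.range len).map (fun k => s (f (m0 + k)).1) := by
      simp only [L, List.map_map]
      rfl
    rw [this]
    apply List.Nodup.map_on _ List.nodup_range
    intro x hx y hy hxy
    simp only [List.mem_range] at hx hy
    by_contra hne
    rcases Nat.lt_or_ge x y with h | h
    · exact absurd (Nat.find_min hex (show m0 + y < n0 by omega) ⟨m0 + x, by omega, hxy⟩) (by simp)
    · have h' : y < x := by omega
      exact absurd (Nat.find_min hex (show m0 + x < n0 by omega) ⟨m0 + y, by omega, hxy.symm⟩) (by simp)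
  · intro a ha
    simp only [L, List.mem_map] at ha
    obtain ⟨k, _, hk⟩ := ha
    rw [← hk]
    exact (f (m0 + k)).2


/-- flow decomposition into simple cycles -/
lemma decomp (s t : A → V) : ∀ (N : ℕ) (lam : A → ℝ),
    (Finset.univ.filter (fun a => lam a ≠ 0)).card ≤ N →
    (∀ a, 0 ≤ lam a) → Conserved s t lam →
    ∃ (n : ℕ) (w : Fin n → SimpleCycle s t) (c : Fin n → ℝ),
      (∀ k, 0 < c k) ∧
      ∀ a, lam a = ∑ k, c k * (if a ∈ (w k).arrows then 1 else 0) := by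
  intro N
  induction N with
  | zero =>
    intro lam hcard _ _
    refine ⟨0, Fin.elim0, Fin.elim0, (fun k => k.elim0), ?_⟩
    intro a
    simp only [Finset.univ_eq_empty, Finset.sum_empty]
    by_contra h
    have : a ∈ Finset.univ.filter (fun a => lam a ≠ 0) := by simpa using h
    have := Finset.card_pos.mpr ⟨a, this⟩
    omega
  | succ N ih =>
    intro lam hcard hnn hc
    by_cases hsupp : ∀ a, lam a = 0
    · refine ⟨0, Fin.elim0, Fin.elim0, (fun k => k.elim0), ?_⟩
      intro a; simp [hsupp a]
    · push_neg at hsupp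
      obtain ⟨a0, ha0⟩ := hsupp
      have h0 : 0 < lam a0 := lt_of_le_of_ne (hnn a0) (Ne.symm ha0)
      obtain ⟨w, hw⟩ := exists_cycle s t lam hnn hc a0 h0
      set L := w.arrows with hLdef
      have hLne : L.toFinset.Nonempty := by
        rcases List.exists_mem_of_ne_nil L w.nonempty with ⟨x, hx⟩
        exact ⟨x, List.mem_toFinset.mpr hx⟩
      obtain ⟨astar, hastar, hmin⟩ := Finset.exists_min_image L.toFinset lam hLne
      rw [List.mem_toFinset] at hastar
      set c0 := lam astar with hc0def
      have hc0 : 0 < c0 := hw astar hastar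
      set lam' : A → ℝ := fun a => lam a - c0 * (if a ∈ L then 1 else 0) with hl'def
      have hnn' : ∀ a, 0 ≤ lam' a := by
        intro a
        by_cases haL : a ∈ L
        · have := hmin a (List.mem_toFinset.mpr haL)
          simp [lam', haL]; linarith
        · simp [lam', haL, hnn a]
      have hc' : Conserved s t lam' := by
        intro v
        have h1 := hc v
        have h2 := ind_conserved s t w v
        simp only [lam', Finset.sum_sub_distrib, ← Finset.mul_sum]
        rw [h1, h2]
      have hsub : ∀ a, lam' a ≠ 0 → lam a ≠ 0 := by
        intro a ha
        by_contra hz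
        have haL : a ∉ L := fun hmem => by
          have := hw a hmem; rw [hz] at this; exact lt_irrefl 0 this
        simp [lam', haL, hz] at ha
      have hstar : lam' astar = 0 := by simp [lam', hastar, hc0def]
      have hcard' : (Finset.univ.filter (fun a => lam' a ≠ 0)).card ≤ N := by
        have hssub : Finset.univ.filter (fun a => lam' a ≠ 0)
            ⊂ Finset.univ.filter (fun a => lam a ≠ 0) := by
          refine Finset.ssubset_iff_of_subset ?_ |>.mpr ?_
          · intro a ha
            simp only [Finset.mem_filter] at ha ⊢
            exact ⟨ha.1, hsub a ha.2⟩
          · exact ⟨astar, by simp [← hc0def, ne_of_gt hc0], by simp [hstar]⟩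
        have := Finset.card_lt_card hssub
        omega
      obtain ⟨n, ws, cs, hpos, hdec⟩ := ih lam' hcard' hnn' hc'
      refine ⟨n + 1, Fin.cons w ws, Fin.cons c0 cs, ?_, ?_⟩
      · intro k
        refine Fin.cases ?_ ?_ k
        · simpa using hc0
        · intro j; simpa using hpos j
      · intro a
        rw [Fin.sum_univ_succ]
        simp only [Fin.cons_succ, Fin.cons_zero]
        have := hdec a
        simp only [lam'] at this
        linarith [this]


/-- the polygon inequality around a simple cycle -/
lemma cycle_triangle' (s t : A → V) (r : V → EuclideanSpace ℝ (Fin 3))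
    (L : List A) (hlen : 0 < L.length)
    (hchain : ∀ (k : ℕ) (h : k < L.length),
      t (L.get ⟨k, h⟩) = s (L.get ⟨(k + 1) % L.length, Nat.mod_lt _ hlen⟩))
    (j : Fin L.length) :
    dist (r (s (L.get j))) (r (t (L.get j)))
      ≤ ∑ k ∈ Finset.univ.erase j,
          dist (r (s (L.get k))) (r (t (L.get k))) := by
  set p : Fin L.length → EuclideanSpace ℝ (Fin 3) := fun k => r (s (L.get k)) with hp
  have hshift : ∀ k : Fin L.length, r (t (L.get k))
      = p ⟨(k.1 + 1) % L.length, Nat.mod_lt _ hlen⟩ := by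
    intro k
    exact congrArg r (hchain k.1 k.2)
  -- the path around the cycle starting after j
  set q : ℕ → EuclideanSpace ℝ (Fin 3) :=
    fun i => p ⟨(j.1 + 1 + i) % L.length, Nat.mod_lt _ hlen⟩ with hq
  have hq0 : q 0 = p ⟨(j.1 + 1) % L.length, Nat.mod_lt _ hlen⟩ := by simp [hq]
  have hqlast : q (L.length - 1) = p j := by
    simp only [hq]
    refine congrArg p (Fin.ext ?_)
    simp only
    have : j.1 + 1 + (L.length - 1) = j.1 + L.length := by omega
    rw [this, Nat.add_mod_right, Nat.mod_eq_of_lt j.2]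
  have key := dist_le_range_sum_dist q (L.length - 1)
  rw [hq0, hqlast] at key
  have hd : dist (r (s (L.get j))) (r (t (L.get j)))
      = dist (p ⟨(j.1 + 1) % L.length, Nat.mod_lt _ hlen⟩) (p j) := by
    rw [hshift j, dist_comm]
  rw [hd]
  refine le_trans key ?_
  -- each step of the path is an arrow distance
  have hstep : ∀ i ∈ Finset.range (L.length - 1),
      dist (q i) (q (i + 1))
        = dist (r (s (L.get ⟨(j.1 + 1 + i) % L.length, Nat.mod_lt _ hlen⟩)))
               (r (t (L.get ⟨(j.1 + 1 + i) % L.length, Nat.mod_lt _ hlen⟩))) := by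
    intro i _
    have hidx : (⟨((j.1 + 1 + i) % L.length + 1) % L.length, Nat.mod_lt _ hlen⟩ : Fin L.length)
        = ⟨(j.1 + 1 + (i + 1)) % L.length, Nat.mod_lt _ hlen⟩ := by
      apply Fin.ext
      simp only
      rw [Nat.mod_add_mod]
      congr 1
    rw [hshift ⟨(j.1 + 1 + i) % L.length, Nat.mod_lt _ hlen⟩, hidx]
  rw [Finset.sum_congr rfl hstep]
  -- reindex: i ↦ (j+1+i) % L.length is injective into univ.erase j
  set g : ℕ → Fin L.length := fun i => ⟨(j.1 + 1 + i) % L.length, Nat.mod_lt _ hlen⟩ with hg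
  have hinj : Set.InjOn g (Finset.range (L.length - 1)) := by
    intro x hx y hy hxy
    simp only [Finset.coe_range, Set.mem_Iio] at hx hy
    simp only [hg, Fin.mk.injEq] at hxy
    have h1 : (j.1 + 1 + x) % L.length = (j.1 + 1 + y) % L.length := hxy
    have hmod : x % L.length = y % L.length := by
      have := Nat.ModEq.add_left_cancel' (j.1 + 1) (h1 : (j.1+1) + x ≡ (j.1+1) + y [MOD L.length])
      exact this
    rwa [Nat.mod_eq_of_lt (by omega), Nat.mod_eq_of_lt (by omega)] at hmod
  have hsubset : (Finset.range (L.length - 1)).image g ⊆ Finset.univ.erase j := by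
    intro k hk
    simp only [Finset.mem_image] at hk
    obtain ⟨i, hi, hik⟩ := hk
    simp only [Finset.mem_range] at hi
    refine Finset.mem_erase.mpr ⟨?_, Finset.mem_univ _⟩
    rw [← hik]
    intro hcon
    simp only [hg, Fin.ext_iff] at hcon
    have h1 : (j.1 + 1 + i) % L.length = j.1 := hcon
    have h2 : (j.1 + 1 + i) % L.length = j.1 % L.length := by rw [h1, Nat.mod_eq_of_lt j.2]
    have h3 : (1 + i) % L.length = 0 % L.length :=
      Nat.ModEq.add_left_cancel' j.1 (by
        have : j.1 + (1 + i) ≡ j.1 + 0 [MOD L.length] := by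
          simpa [← add_assoc, Nat.ModEq] using (h2 : _ % L.length = _ % L.length)
        exact this)
    have h4 : L.length ∣ (1 + i) := Nat.dvd_of_mod_eq_zero (by simpa using h3)
    have := Nat.le_of_dvd (by omega) h4
    omega
  calc ∑ i ∈ Finset.range (L.length - 1),
        dist (r (s (L.get (g i)))) (r (t (L.get (g i))))
      = ∑ k ∈ (Finset.range (L.length - 1)).image g,
          dist (r (s (L.get k))) (r (t (L.get k))) := by
        rw [Finset.sum_image (fun x hx y hy => hinj (by simpa using hx) (by simpa using hy))]
    _ ≤ ∑ k ∈ Finset.univ.erase j,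
          dist (r (s (L.get k))) (r (t (L.get k))) := by
        exact Finset.sum_le_sum_of_subset_of_nonneg hsubset (fun _ _ _ => dist_nonneg)


lemma sum_mul_ind (S : Finset A) (f : A → ℝ) (L : List A) :
    ∑ a ∈ S, f a * (if a ∈ L then 1 else 0)
      = ∑ a ∈ S.filter (fun a => a ∈ L), f a := by
  rw [Finset.sum_filter]
  refine Finset.sum_congr rfl ?_
  intro a _
  by_cases h : a ∈ L <;> simp [h]

lemma key_ineq (s t : A → V) (r : V → EuclideanSpace ℝ (Fin 3)) (I : Finset A)
    (w : SimpleCycle s t)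
    (hw : (w.arrows.filter (fun a => decide (a ∈ I))).length ≤ 1) :
    ∑ a ∈ I, dist (r (s a)) (r (t a)) * (if a ∈ w.arrows then 1 else 0)
      ≤ ∑ a ∈ Iᶜ, dist (r (s a)) (r (t a)) * (if a ∈ w.arrows then 1 else 0) := by
  classical
  set d : A → ℝ := fun a => dist (r (s a)) (r (t a)) with hd
  rw [sum_mul_ind, sum_mul_ind]
  set L := w.arrows with hLdef
  set M := L.filter (fun a => decide (a ∈ I)) with hM
  have hnodup : L.Nodup := nodup_arrows s t w
  rcases Nat.lt_or_ge M.length 1 with hM0 | hM1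
  · -- no arrow of the cycle lies in I
    have hMnil : M = [] := List.length_eq_zero_iff.mp (by omega)
    have hempty : I.filter (fun a => a ∈ L) = ∅ := by
      rw [Finset.filter_eq_empty_iff]
      intro a haI haL
      have : a ∈ M := by
        rw [hM, List.mem_filter]
        exact ⟨haL, by simpa using haI⟩
      rw [hMnil] at this
      simp at this
    rw [hempty]
    simp only [Finset.sum_empty]
    exact Finset.sum_nonneg (fun a _ => dist_nonneg)
  · -- exactly one arrow a0
    have hlen1 : M.length = 1 := le_antisymm hw hM1
    obtain ⟨a0, ha0⟩ := List.length_eq_one_iff.mp hlen1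
    have ha0M : a0 ∈ M := by rw [ha0]; simp
    have ha0L : a0 ∈ L := (List.mem_filter.mp ha0M).1
    have ha0I : a0 ∈ I := by
      have := (List.mem_filter.mp ha0M).2; simpa using this
    have hchar : ∀ a ∈ L, a ∈ I ↔ a = a0 := by
      intro a haL
      constructor
      · intro haI
        have : a ∈ M := List.mem_filter.mpr ⟨haL, by simpa using haI⟩
        rw [ha0] at this; simpa using this
      · rintro rfl; exact ha0I
    have hsingle : I.filter (fun a => a ∈ L) = {a0} := by
      ext a
      simp only [Finset.mem_filter, Finset.mem_singleton]
      constructor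
      · rintro ⟨haI, haL⟩; exact (hchar a haL).mp haI
      · rintro rfl; exact ⟨ha0I, ha0L⟩
    rw [hsingle, Finset.sum_singleton]
    obtain ⟨j, hj⟩ := List.mem_iff_get.mp ha0L
    have hlen : 0 < L.length := List.length_pos_iff.mpr w.nonempty
    have htri := cycle_triangle' s t r L hlen (by intro k h; exact w.chain k h) j
    rw [hj] at htri
    refine le_trans htri ?_
    -- convert index sum to element sum
    have htot : ∑ k : Fin L.length, d (L.get k) = ∑ a ∈ L.toFinset, d a := by
      rw [List.sum_toFinset _ hnodup, ← Fin.sum_univ_fun_getElem]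
      rfl
    have herase : ∑ k ∈ Finset.univ.erase j, d (L.get k)
        = ∑ a ∈ L.toFinset.erase a0, d a := by
      have h1 : ∑ k ∈ Finset.univ.erase j, d (L.get k)
          = (∑ k : Fin L.length, d (L.get k)) - d (L.get j) :=
        (Finset.sum_erase_eq_sub (Finset.mem_univ j))
      have h2 : ∑ a ∈ L.toFinset.erase a0, d a
          = (∑ a ∈ L.toFinset, d a) - d a0 :=
        (Finset.sum_erase_eq_sub (List.mem_toFinset.mpr ha0L))
      rw [h1, h2, htot, hj]
    rw [herase]
    have hset : L.toFinset.erase a0 = Iᶜ.filter (fun a => a ∈ L) := by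
      ext a
      simp only [Finset.mem_erase, List.mem_toFinset, Finset.mem_filter, Finset.mem_compl]
      constructor
      · rintro ⟨hne, haL⟩
        exact ⟨fun haI => hne ((hchar a haL).mp haI), haL⟩
      · rintro ⟨haI, haL⟩
        exact ⟨fun heq => haI (heq ▸ ha0I), haL⟩
    rw [hset]


end Stmt13Aux

open Stmt13Aux

/-- If a quiver admits a scaling solution (a configuration of points in `ℝ³` with
distinct endpoints along arrows satisfying the conformal Denef equations), then every
weak cut `I` satisfies `|I| ≤ |Q₁ − I|`. -/
theorem stmt13 {V A : Type} [Fintype V] [Fintype A] [DecidableEq V] [DecidableEq A]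
    (s t : A → V) (r : V → EuclideanSpace ℝ (Fin 3))
    (hd : ∀ a : A, r (s a) ≠ r (t a))
    (hdenef : ∀ i : V,
      ∑ a ∈ Finset.univ.filter (fun a => s a = i), (dist (r (s a)) (r (t a)))⁻¹
      - ∑ a ∈ Finset.univ.filter (fun a => t a = i), (dist (r (s a)) (r (t a)))⁻¹ = 0) :
    ∀ I : Finset A, IsWeakCut s t I → I.card ≤ Iᶜ.card := by
  classical
  intro I hI
  have hdpos : ∀ a, (0:ℝ) < dist (r (s a)) (r (t a)) := fun a => dist_pos.mpr (hd a)
  set lam : A → ℝ := fun a => (dist (r (s a)) (r (t a)))⁻¹ with hlam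
  have hnn : ∀ a, 0 ≤ lam a := fun a => inv_nonneg.mpr dist_nonneg
  have hcons : Conserved s t lam := by
    intro i
    have := hdenef i
    have h := sub_eq_zero.mp this
    exact h.symm
  obtain ⟨n, w, c, hpos, hdec⟩ :=
    decomp s t (Finset.univ.filter (fun a => lam a ≠ 0)).card lam le_rfl hnn hcons
  have hcardsum : ∀ S : Finset A,
      (S.card : ℝ) = ∑ k, c k * ∑ a ∈ S, dist (r (s a)) (r (t a)) * (if a ∈ (w k).arrows then 1 else 0) := by
    intro S
    have h1 : (S.card : ℝ) = ∑ a ∈ S, dist (r (s a)) (r (t a)) * lam a := by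
      rw [Finset.sum_congr rfl (fun a _ => mul_inv_cancel₀ (hdpos a).ne')]
      simp
    rw [h1]
    have h2 : ∀ a ∈ S, dist (r (s a)) (r (t a)) * lam a
        = ∑ k, c k * (dist (r (s a)) (r (t a)) * (if a ∈ (w k).arrows then 1 else 0)) := by
      intro a _
      rw [hdec a, Finset.mul_sum]
      exact Finset.sum_congr rfl (fun k _ => by ring)
    rw [Finset.sum_congr rfl h2, Finset.sum_comm]
    exact Finset.sum_congr rfl (fun k _ => by rw [Finset.mul_sum])
  have hreal : (I.card : ℝ) ≤ (Iᶜ.card : ℝ) := by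
    rw [hcardsum I, hcardsum Iᶜ]
    refine Finset.sum_le_sum ?_
    intro k _
    exact mul_le_mul_of_nonneg_left (key_ineq s t r I (w k) (hI (w k))) (hpos k).le
  exact_mod_cast hreal
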